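/- Let X be a metric space, let μ, ν be finite Borel measures on X, and let γ ≥ 0 be a real number. Then sup over all Borel-measurable functions f : X → [−γ, γ] of |∫_X f dμ − ∫_X f dν| equals the sup over all continuous functions f : X → [−γ, γ] with bounded support of |∫_X f dμ − ∫_X f dν|. -/

import Mathlib

open MeasureTheory Filter Topology

private lemma stmt16_integrable {X : Type*} [MeasurableSpace X] (μ : Measure X)
    [IsFiniteMeasure μ] {f : X → ℝ} (hf : Measurable f) {C : ℝ} (hC : ∀ x, |f x| ≤ C) :
    Integrable f μ :=
  (integrable_const C).mono' hf.aestronglyMeasurable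
    (Filter.Eventually.of_forall fun x => by simpa using hC x)

/-- For two finite Borel measures on a metric space and γ ≥ 0, the supremum of
|∫ f dμ − ∫ f dν| over measurable functions with values in [−γ, γ] equals the supremum over
continuous functions with bounded support and values in [−γ, γ]. -/
theorem stmt16 {X : Type*} [MetricSpace X] [MeasurableSpace X] [BorelSpace X]
    (μ ν : Measure X) (hμ : IsFiniteMeasure μ) (hν : IsFiniteMeasure ν)
    (γ : ℝ) (hγ : 0 ≤ γ) :
    (⨆ f : {f : X → ℝ // Measurable f ∧ ∀ x, f x ∈ Set.Icc (-γ) γ},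
        |∫ x, f.1 x ∂μ - ∫ x, f.1 x ∂ν|) =
      ⨆ f : {f : X → ℝ // Continuous f ∧ Bornology.IsBounded (tsupport f) ∧
          ∀ x, f x ∈ Set.Icc (-γ) γ},
        |∫ x, f.1 x ∂μ - ∫ x, f.1 x ∂ν| := by
  haveI := hμ; haveI := hν
  -- nonemptiness of the two index types
  have hzero : ∀ x : X, (fun _ : X => (0:ℝ)) x ∈ Set.Icc (-γ) γ := by
    intro x; exact ⟨neg_nonpos.mpr hγ, hγ⟩
  haveI hne1 : Nonempty {f : X → ℝ // Measurable f ∧ ∀ x, f x ∈ Set.Icc (-γ) γ} :=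
    ⟨⟨fun _ => 0, measurable_const, hzero⟩⟩
  have htsupp0 : Bornology.IsBounded (tsupport (fun _ : X => (0:ℝ))) := by
    have : tsupport (fun _ : X => (0:ℝ)) = ∅ := by
      simp [tsupport, Function.support]
    rw [this]; exact Bornology.isBounded_empty
  haveI hne2 : Nonempty {f : X → ℝ // Continuous f ∧ Bornology.IsBounded (tsupport f) ∧
      ∀ x, f x ∈ Set.Icc (-γ) γ} :=
    ⟨⟨fun _ => 0, continuous_const, htsupp0, hzero⟩⟩
  -- bound on the quantity
  set M : ℝ := γ * (μ Set.univ).toReal + γ * (ν Set.univ).toReal with hMdef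
  have hbound : ∀ (f : X → ℝ), Measurable f → (∀ x, f x ∈ Set.Icc (-γ) γ) →
      |∫ x, f x ∂μ - ∫ x, f x ∂ν| ≤ M := by
    intro f hf hfb
    have habs : ∀ x, |f x| ≤ γ := fun x => abs_le.mpr ⟨(hfb x).1, (hfb x).2⟩
    have h1 : ∀ (m : Measure X) [IsFiniteMeasure m], |∫ x, f x ∂m| ≤ γ * (m Set.univ).toReal := by
      intro m _
      have hint : Integrable f m := stmt16_integrable m hf habs
      calc |∫ x, f x ∂m| ≤ ∫ x, |f x| ∂m := by
            simpa using norm_integral_le_integral_norm (μ := m) f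
        _ ≤ ∫ _, γ ∂m := integral_mono hint.abs (integrable_const γ) habs
        _ = γ * (m Set.univ).toReal := by simp [mul_comm, measureReal_def]
    calc |∫ x, f x ∂μ - ∫ x, f x ∂ν| ≤ |∫ x, f x ∂μ| + |∫ x, f x ∂ν| := abs_sub _ _
      _ ≤ M := add_le_add (h1 μ) (h1 ν)
  have hbdd1 : BddAbove (Set.range fun f : {f : X → ℝ // Measurable f ∧
      ∀ x, f x ∈ Set.Icc (-γ) γ} => |∫ x, f.1 x ∂μ - ∫ x, f.1 x ∂ν|) := by
    refine ⟨M, ?_⟩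
    rintro y ⟨f, rfl⟩
    exact hbound f.1 f.2.1 f.2.2
  have hbdd2 : BddAbove (Set.range fun f : {f : X → ℝ // Continuous f ∧
      Bornology.IsBounded (tsupport f) ∧ ∀ x, f x ∈ Set.Icc (-γ) γ} =>
      |∫ x, f.1 x ∂μ - ∫ x, f.1 x ∂ν|) := by
    refine ⟨M, ?_⟩
    rintro y ⟨f, rfl⟩
    exact hbound f.1 f.2.1.measurable f.2.2.2
  refine le_antisymm ?_ ?_
  swap
  · -- easy direction: continuous functions are measurable
    refine ciSup_le fun f => ?_
    exact le_ciSup hbdd1 ⟨f.1, f.2.1.measurable, f.2.2.2⟩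
  -- hard direction
  rcases isEmpty_or_nonempty X with hX | hX
  · refine ciSup_le fun f => ?_
    have h0 : ∀ (m : Measure X), ∫ x, f.1 x ∂m = 0 := by
      intro m
      have : f.1 = fun _ => (0:ℝ) := funext fun x => (hX.elim x)
      rw [this]; simp
    rw [h0 μ, h0 ν]
    simp only [sub_zero, abs_zero]
    have : (0:ℝ) = |∫ x, (fun _ : X => (0:ℝ)) x ∂μ - ∫ x, (fun _ : X => (0:ℝ)) x ∂ν| := by simp
    rw [this]
    exact le_ciSup hbdd2 ⟨fun _ => 0, continuous_const, htsupp0, hzero⟩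
  obtain ⟨x₀⟩ := hX
  -- Hahn decomposition
  obtain ⟨P, hPm, hP1, hP2⟩ := hahn_decomposition (μ := μ) (ν := ν)
  set D : ℝ := γ * ((μ P).toReal - (ν P).toReal) + γ * ((ν Pᶜ).toReal - (μ Pᶜ).toReal) with hDdef
  -- every measurable f has difference at most D
  have hA : ∀ (f : X → ℝ), Measurable f → (∀ x, f x ∈ Set.Icc (-γ) γ) →
      ∫ x, f x ∂μ - ∫ x, f x ∂ν ≤ D := by
    intro f hf hfb
    have habs : ∀ x, |f x| ≤ γ := fun x => abs_le.mpr ⟨(hfb x).1, (hfb x).2⟩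
    have hIμ : Integrable f μ := stmt16_integrable μ hf habs
    have hIν : Integrable f ν := stmt16_integrable ν hf habs
    have hsplitμ : ∫ x, f x ∂μ = ∫ x in P, f x ∂μ + ∫ x in Pᶜ, f x ∂μ :=
      (integral_add_compl hPm hIμ).symm
    have hsplitν : ∫ x, f x ∂ν = ∫ x in P, f x ∂ν + ∫ x in Pᶜ, f x ∂ν :=
      (integral_add_compl hPm hIν).symm
    have hleP : ν.restrict P ≤ μ.restrict P := by
      rw [Measure.le_iff]
      intro s hs
      rw [Measure.restrict_apply hs, Measure.restrict_apply hs]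
      exact hP1 _ (hs.inter hPm) Set.inter_subset_right
    have hlePc : μ.restrict Pᶜ ≤ ν.restrict Pᶜ := by
      rw [Measure.le_iff]
      intro s hs
      rw [Measure.restrict_apply hs, Measure.restrict_apply hs]
      exact hP2 _ (hs.inter hPm.compl) Set.inter_subset_right
    have hc1 : ∫ x in P, f x ∂μ - ∫ x in P, f x ∂ν ≤ γ * ((μ P).toReal - (ν P).toReal) := by
      have hmono : ∫ x, (γ - f x) ∂(ν.restrict P) ≤ ∫ x, (γ - f x) ∂(μ.restrict P) := by
        refine integral_mono_measure hleP ?_ ?_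
        · exact Filter.Eventually.of_forall fun x => show (0:ℝ) ≤ γ - f x from sub_nonneg.mpr (hfb x).2
        · exact (integrable_const γ).sub hIμ.restrict
      have e1 : ∫ x, (γ - f x) ∂(ν.restrict P) = γ * (ν P).toReal - ∫ x in P, f x ∂ν := by
        rw [integral_sub (integrable_const γ) hIν.restrict]
        simp [Measure.restrict_apply_univ, mul_comm, measureReal_def]
      have e2 : ∫ x, (γ - f x) ∂(μ.restrict P) = γ * (μ P).toReal - ∫ x in P, f x ∂μ := by
        rw [integral_sub (integrable_const γ) hIμ.restrict]
        simp [Measure.restrict_apply_univ, mul_comm, measureReal_def]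
      rw [e1, e2] at hmono
      linarith [hmono]
    have hc2 : ∫ x in Pᶜ, f x ∂μ - ∫ x in Pᶜ, f x ∂ν ≤
        γ * ((ν Pᶜ).toReal - (μ Pᶜ).toReal) := by
      have hmono : ∫ x, (γ + f x) ∂(μ.restrict Pᶜ) ≤ ∫ x, (γ + f x) ∂(ν.restrict Pᶜ) := by
        refine integral_mono_measure hlePc ?_ ?_
        · exact Filter.Eventually.of_forall fun x => show (0:ℝ) ≤ γ + f x by linarith [(hfb x).1]
        · exact (integrable_const γ).add hIν.restrict
      have e1 : ∫ x, (γ + f x) ∂(μ.restrict Pᶜ) = γ * (μ Pᶜ).toReal + ∫ x in Pᶜ, f x ∂μ := by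
        rw [integral_add (integrable_const γ) hIμ.restrict]
        simp [Measure.restrict_apply_univ, mul_comm, measureReal_def]
      have e2 : ∫ x, (γ + f x) ∂(ν.restrict Pᶜ) = γ * (ν Pᶜ).toReal + ∫ x in Pᶜ, f x ∂ν := by
        rw [integral_add (integrable_const γ) hIν.restrict]
        simp [Measure.restrict_apply_univ, mul_comm, measureReal_def]
      rw [e1, e2] at hmono
      linarith [hmono]
    rw [hsplitμ, hsplitν, hDdef]
    linarith [hc1, hc2]
  -- now it suffices to show D ≤ RHS
  have hDle : D ≤ ⨆ f : {f : X → ℝ // Continuous f ∧ Bornology.IsBounded (tsupport f) ∧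
      ∀ x, f x ∈ Set.Icc (-γ) γ}, |∫ x, f.1 x ∂μ - ∫ x, f.1 x ∂ν| := by
    refine le_of_forall_pos_le_add fun ε hε => ?_
    set τ : Measure X := μ + ν with hτdef
    haveI : IsFiniteMeasure τ := by
      constructor
      rw [hτdef]
      simp only [Measure.add_apply]
      exact ENNReal.add_lt_top.mpr ⟨measure_lt_top μ _, measure_lt_top ν _⟩
    set c : ℝ := ε / (12 * γ + 1) with hcdef
    have hcpos : 0 < c := div_pos hε (by linarith)
    have hcε : c * (12 * γ + 1) = ε := div_mul_cancel₀ ε (by positivity)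
    set δ : ENNReal := ENNReal.ofReal c with hδdef
    have hδ0 : δ ≠ 0 := (ENNReal.ofReal_pos.mpr hcpos).ne'
    have hδtop : δ ≠ ⊤ := ENNReal.ofReal_ne_top
    have hδreal : δ.toReal = c := ENNReal.toReal_ofReal hcpos.le
    -- a closed set inside P and an open set containing P
    obtain ⟨F, hFP, hFc, hF⟩ :=
      hPm.exists_isClosed_diff_lt (μ := τ) (measure_ne_top τ P) hδ0
    obtain ⟨U, hPU, hUo, hUfin, hU⟩ :=
      hPm.exists_isOpen_diff_lt (μ := τ) (measure_ne_top τ P) hδ0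
    -- a large ball capturing most of the mass
    have htend : Tendsto (fun n : ℕ => τ (Metric.closedBall x₀ n)ᶜ) atTop (𝓝 0) := by
      have h1 : (⋂ n : ℕ, (Metric.closedBall x₀ (n:ℝ))ᶜ) = ∅ := by
        rw [← Set.compl_iUnion, Metric.iUnion_closedBall_nat, Set.compl_univ]
      have h2 := tendsto_measure_iInter_atTop (μ := τ)
        (s := fun n : ℕ => (Metric.closedBall x₀ (n:ℝ))ᶜ)
        (fun n => Metric.isClosed_closedBall.measurableSet.compl.nullMeasurableSet)
        (fun n m hnm => Set.compl_subset_compl.mpr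
          (Metric.closedBall_subset_closedBall (by exact_mod_cast hnm)))
        ⟨0, measure_ne_top τ _⟩
      rwa [h1, measure_empty] at h2
    obtain ⟨n, hn⟩ := (htend.eventually (gt_mem_nhds (pos_iff_ne_zero.mpr hδ0))).exists
    -- Urysohn function
    have hdisj : Disjoint Uᶜ F := disjoint_compl_left.mono_right (hFP.trans hPU)
    obtain ⟨u, hu0, hu1, hub⟩ :=
      exists_continuous_zero_one_of_isClosed hUo.isClosed_compl hFc hdisj
    -- cutoff function
    set χ : X → ℝ := fun x => max 0 (min 1 ((n + 1 : ℝ) - dist x x₀)) with hχdef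
    have hχcont : Continuous χ :=
      continuous_const.max (continuous_const.min
        (continuous_const.sub (continuous_id.dist continuous_const)))
    have hχ01 : ∀ x, 0 ≤ χ x ∧ χ x ≤ 1 := fun x =>
      ⟨le_max_left _ _, max_le zero_le_one (min_le_left _ _)⟩
    have hχ1 : ∀ x ∈ Metric.closedBall x₀ n, χ x = 1 := by
      intro x hx
      have hd : dist x x₀ ≤ n := Metric.mem_closedBall.mp hx
      have h1 : (1:ℝ) ≤ (n + 1 : ℝ) - dist x x₀ := by linarith
      rw [hχdef]
      simp only [min_eq_left h1, max_eq_right zero_le_one]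
    have hχ0 : ∀ x, x ∉ Metric.closedBall x₀ (n + 1 : ℝ) → χ x = 0 := by
      intro x hx
      have hd : ¬ dist x x₀ ≤ (n + 1 : ℝ) := fun hcon => hx (Metric.mem_closedBall.mpr hcon)
      push_neg at hd
      have h1 : min 1 ((n + 1 : ℝ) - dist x x₀) ≤ 0 :=
        le_trans (min_le_right _ _) (by linarith)
      rw [hχdef]
      simp only [max_eq_left h1]
    -- the approximating function
    set h : X → ℝ := fun x => γ * (2 * u x - 1) * χ x with hhdef
    have hhcont : Continuous h :=
      (continuous_const.mul ((continuous_const.mul u.continuous).sub continuous_const)).mul hχcont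
    have hhabs : ∀ x, |h x| ≤ γ := by
      intro x
      rw [hhdef]
      have h1 : |2 * u x - 1| ≤ 1 := by
        obtain ⟨a, b⟩ := hub x
        rw [abs_le]; constructor <;> linarith
      have h2 := hχ01 x
      rw [abs_mul, abs_mul, abs_of_nonneg hγ, abs_of_nonneg h2.1]
      calc γ * |2 * u x - 1| * χ x ≤ γ * 1 * 1 := by
            apply mul_le_mul (mul_le_mul_of_nonneg_left h1 hγ) h2.2 h2.1
            positivity
        _ = γ := by ring
    have hhb : ∀ x, h x ∈ Set.Icc (-γ) γ := fun x => Set.mem_Icc.mpr (abs_le.mp (hhabs x))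
    have hhsupp : Bornology.IsBounded (tsupport h) := by
      have hss : Function.support h ⊆ Metric.closedBall x₀ (n + 1 : ℝ) := by
        intro x hx
        by_contra hxmem
        exact hx (by rw [hhdef]; dsimp only; rw [hχ0 x hxmem, mul_zero])
      exact Metric.isBounded_closedBall.subset
        (closure_minimal hss Metric.isClosed_closedBall)
    -- the step function g₀ and the exceptional set E
    set g₀ : X → ℝ := fun x => Set.indicator P (fun _ => 2 * γ) x - γ with hg₀def
    have hg₀abs : ∀ x, |g₀ x| ≤ γ := by
      intro x
      rw [hg₀def]
      dsimp only
      by_cases hxP : x ∈ P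
      · rw [Set.indicator_of_mem hxP]
        rw [abs_le]; constructor <;> linarith
      · rw [Set.indicator_of_notMem hxP]
        rw [abs_le]; constructor <;> linarith
    have hg₀m : Measurable g₀ := (measurable_const.indicator hPm).sub measurable_const
    set E : Set X := (P \ F) ∪ (U \ P) ∪ (Metric.closedBall x₀ (n:ℝ))ᶜ with hEdef
    have hEm : MeasurableSet E :=
      ((hPm.diff hFc.measurableSet).union (hUo.measurableSet.diff hPm)).union
        Metric.isClosed_closedBall.measurableSet.compl
    have hagree : ∀ x, x ∉ E → h x = g₀ x := by
      intro x hx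
      rw [hEdef] at hx
      simp only [Set.mem_union, not_or, Set.mem_diff, not_and, Set.mem_compl_iff, not_not] at hx
      obtain ⟨⟨hx1, hx2⟩, hx3⟩ := hx
      have hχx : χ x = 1 := hχ1 x hx3
      rw [hhdef, hg₀def]
      dsimp only
      rw [hχx, mul_one]
      by_cases hxP : x ∈ P
      · have hxF : x ∈ F := hx1 hxP
        have hux : u x = 1 := by simpa using hu1 hxF
        rw [hux, Set.indicator_of_mem hxP]; ring
      · have hxU : x ∉ U := fun hxU => hxP (hx2 hxU)
        have hux : u x = 0 := by simpa using hu0 (Set.mem_compl hxU)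
        rw [hux, Set.indicator_of_notMem hxP]; ring
    -- error estimate
    have herr : ∀ (m : Measure X), IsFiniteMeasure m →
        |∫ x, h x ∂m - ∫ x, g₀ x ∂m| ≤ 2 * γ * (m E).toReal := by
      intro m hmfin
      haveI := hmfin
      have hih : Integrable h m := stmt16_integrable m hhcont.measurable hhabs
      have hig : Integrable g₀ m := stmt16_integrable m hg₀m hg₀abs
      have hptwise : ∀ x, |h x - g₀ x| ≤ Set.indicator E (fun _ => 2 * γ) x := by
        intro x
        by_cases hx : x ∈ E
        · rw [Set.indicator_of_mem hx]
          calc |h x - g₀ x| ≤ |h x| + |g₀ x| := abs_sub _ _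
            _ ≤ 2 * γ := by linarith [hhabs x, hg₀abs x]
        · rw [Set.indicator_of_notMem hx, hagree x hx]; simp
      calc |∫ x, h x ∂m - ∫ x, g₀ x ∂m| = |∫ x, (h x - g₀ x) ∂m| := by
            rw [integral_sub hih hig]
        _ ≤ ∫ x, |h x - g₀ x| ∂m := by
            simpa using norm_integral_le_integral_norm (μ := m) (fun x => h x - g₀ x)
        _ ≤ ∫ x, Set.indicator E (fun _ => 2 * γ) x ∂m :=
            integral_mono (hih.sub hig).abs
              ((integrable_const (2 * γ)).indicator hEm) hptwise
        _ = (m E).toReal * (2 * γ) := by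
            rw [integral_indicator_const _ hEm, smul_eq_mul, measureReal_def]
        _ = 2 * γ * (m E).toReal := by ring
    -- the integral of g₀ realises D
    have hsplitm : ∀ (m : Measure X), IsFiniteMeasure m →
        (m Set.univ).toReal = (m P).toReal + (m Pᶜ).toReal := by
      intro m hmfin
      haveI := hmfin
      rw [← ENNReal.toReal_add (measure_ne_top m P) (measure_ne_top m Pᶜ),
        measure_add_measure_compl hPm]
    have hintg₀ : ∀ (m : Measure X), IsFiniteMeasure m →
        ∫ x, g₀ x ∂m = 2 * γ * (m P).toReal - γ * (m Set.univ).toReal := by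
      intro m hmfin
      haveI := hmfin
      rw [hg₀def]
      rw [integral_sub ((integrable_const (2 * γ)).indicator hPm) (integrable_const γ)]
      rw [integral_indicator_const _ hPm, integral_const, smul_eq_mul, smul_eq_mul]
      simp only [measureReal_def]
      ring
    have hg₀D : ∫ x, g₀ x ∂μ - ∫ x, g₀ x ∂ν = D := by
      rw [hintg₀ μ hμ, hintg₀ ν hν, hsplitm μ hμ, hsplitm ν hν, hDdef]
      ring
    -- measure of the exceptional set is small
    have hτE : (τ E).toReal < 3 * c := by
      have h1 : τ E ≤ τ (P \ F) + τ (U \ P) + τ (Metric.closedBall x₀ (n:ℝ))ᶜ := by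
        rw [hEdef]
        calc τ ((P \ F) ∪ (U \ P) ∪ (Metric.closedBall x₀ (n:ℝ))ᶜ)
            ≤ τ ((P \ F) ∪ (U \ P)) + τ (Metric.closedBall x₀ (n:ℝ))ᶜ :=
              measure_union_le _ _
          _ ≤ τ (P \ F) + τ (U \ P) + τ (Metric.closedBall x₀ (n:ℝ))ᶜ :=
              add_le_add_left (measure_union_le _ _) _
      have h2 : τ E < δ + δ + δ := lt_of_le_of_lt h1 (ENNReal.add_lt_add (ENNReal.add_lt_add hF hU) hn)
      have h3 : (δ + δ + δ).toReal = 3 * c := by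
        rw [ENNReal.toReal_add (by simp [hδtop]) hδtop, ENNReal.toReal_add hδtop hδtop, hδreal]
        ring
      have h4 : (τ E).toReal < (δ + δ + δ).toReal := by
        refine (ENNReal.toReal_lt_toReal (measure_ne_top τ E) ?_).mpr h2
        simp [hδtop]
      rwa [h3] at h4
    have hμτ : (μ E).toReal ≤ (τ E).toReal := by
      refine ENNReal.toReal_mono (measure_ne_top τ E) ?_
      rw [hτdef, Measure.add_apply]; exact le_self_add
    have hντ : (ν E).toReal ≤ (τ E).toReal := by
      refine ENNReal.toReal_mono (measure_ne_top τ E) ?_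
      rw [hτdef, Measure.add_apply]; exact le_add_self
    have hb1 : 2 * γ * (μ E).toReal ≤ 6 * (γ * c) := by
      have h5 : (μ E).toReal ≤ 3 * c := hμτ.trans hτE.le
      nlinarith [h5, hγ, ENNReal.toReal_nonneg (a := μ E)]
    have hb2 : 2 * γ * (ν E).toReal ≤ 6 * (γ * c) := by
      have h5 : (ν E).toReal ≤ 3 * c := hντ.trans hτE.le
      nlinarith [h5, hγ, ENNReal.toReal_nonneg (a := ν E)]
    have hce : 12 * (γ * c) + c = ε := by linear_combination hcε
    have e1' := abs_le.mp (herr μ hμ)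
    have e2' := abs_le.mp (herr ν hν)
    have key : D - ε ≤ ∫ x, h x ∂μ - ∫ x, h x ∂ν := by
      linarith [e1'.1, e2'.2, hb1, hb2, hg₀D, hce, hcpos]
    calc D ≤ (∫ x, h x ∂μ - ∫ x, h x ∂ν) + ε := by linarith
      _ ≤ |∫ x, h x ∂μ - ∫ x, h x ∂ν| + ε := add_le_add_left (le_abs_self _) ε
      _ ≤ (⨆ f : {f : X → ℝ // Continuous f ∧ Bornology.IsBounded (tsupport f) ∧
            ∀ x, f x ∈ Set.Icc (-γ) γ}, |∫ x, f.1 x ∂μ - ∫ x, f.1 x ∂ν|) + ε :=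
          add_le_add_left (le_ciSup hbdd2 ⟨h, hhcont, hhsupp, hhb⟩) ε
  refine ciSup_le fun f => ?_
  have h1 := hA f.1 f.2.1 f.2.2
  have h2 : ∫ x, (-(f.1 x)) ∂μ - ∫ x, (-(f.1 x)) ∂ν ≤ D := by
    refine hA (fun x => -(f.1 x)) f.2.1.neg fun x => ?_
    simp only [Set.mem_Icc]
    constructor
    · linarith [(f.2.2 x).2]
    · linarith [(f.2.2 x).1]
  rw [integral_neg, integral_neg] at h2
  have : |∫ x, f.1 x ∂μ - ∫ x, f.1 x ∂ν| ≤ D := abs_sub_le_iff.mpr ⟨h1, by linarith⟩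
  exact this.trans hDle
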